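/- arXiv:2301.01897 — 5 statements merged into one kernel-verified Lean document; each statement's English description precedes it below -/
import Mathlib

section
/- Let M be a virtually d-periodic object in an abelian category A with enough projectives. Then Hom_{D_sg(A)}(M, Σ^{nd}(M)) ≠ 0 for every integer n (positive, zero, and negative). -/
open CategoryTheory Limits Pretriangulated

noncomputable section

namespace SingPaper

variable {A : Type*} [Category A] [Abelian A] [EnoughProjectives A]

/-- A chosen first syzygy `Ω(M)`: the kernel of the chosen epimorphism
`Projective.π M : Projective.over M ⟶ M` from a projective object. -/
def syz (M : A) : A := kernel (Projective.π M)

/-- Iterated syzygies `Ω^d(M)`. -/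
def syzPow (d : ℕ) (M : A) : A := match d with
  | 0 => M
  | n + 1 => syz (syzPow n M)

/-- `extClosure M` is the class of objects of `⟨M⟩`, the smallest full subcategory of `A`
containing `M` and all projective objects which is closed under direct summands and
extensions. -/
inductive extClosure (M : A) : A → Prop
  | self : extClosure M M
  | proj (P : A) : Projective P → extClosure M P
  | summand (X Y : A) (s : X ⟶ Y) (r : Y ⟶ X) :
      s ≫ r = 𝟙 X → extClosure M Y → extClosure M X
  | ext (X Y Z : A) (f : X ⟶ Y) (g : Y ⟶ Z) (w : f ≫ g = 0) :
      (ShortComplex.mk f g w).ShortExact →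
      extClosure M X → extClosure M Z → extClosure M Y

/-- `M` has finite projective dimension iff some iterated syzygy is projective. -/
def HasFiniteProjDim (M : A) : Prop := ∃ n : ℕ, Projective (syzPow n M)

/-- `M` is virtually `d`-periodic: it has infinite projective dimension and
`Ω^d(M)` belongs to `⟨M⟩`. -/
def VirtuallyPeriodic (d : ℕ) (M : A) : Prop :=
  ¬ HasFiniteProjDim M ∧ extClosure M (syzPow d M)

variable {T : Type*} [Category T] [Preadditive T] [HasZeroObject T] [HasShift T ℤ]
  [∀ n : ℤ, (shiftFunctor T n).Additive] [Pretriangulated T]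

/-- `ι : A ⥤ T` exhibits the triangulated category `T` as the singularity category
`D_sg(A) = D^b(A)/K^b(P)` of `A`; we record the characteristic properties of the
composite functor `A ⥤ D^b(A) ⥤ D_sg(A)` sending an object to the corresponding
stalk complex in degree `0`. -/
structure IsSingularityCategory (ι : A ⥤ T) : Prop where
  /-- projective objects of `A` become zero objects in `D_sg(A)` -/
  proj_isZero : ∀ P : A, Projective P → IsZero (ι.obj P)
  /-- any short exact sequence in `A` induces a distinguished triangle in `D_sg(A)` -/
  ses_triangle : ∀ {X Y Z : A} (f : X ⟶ Y) (g : Y ⟶ Z) (w : f ≫ g = 0),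
      (ShortComplex.mk f g w).ShortExact →
      ∃ h : ι.obj Z ⟶ (ι.obj X)⟦(1 : ℤ)⟧,
        Triangle.mk (ι.map f) (ι.map g) h ∈ distTriang T
  /-- an object of `A` becomes zero in `D_sg(A)` iff it has finite projective dimension -/
  isZero_iff : ∀ M : A, IsZero (ι.obj M) ↔ HasFiniteProjDim M
  /-- every object of `D_sg(A)` is isomorphic to a shift of a stalk complex -/
  obj_surj : ∀ X : T, ∃ (M : A) (n : ℤ), Nonempty (X ≅ (ι.obj M)⟦n⟧)


/-- Transport "all homs are zero" along isomorphisms on both sides. -/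
lemma hom_zero_of_iso {X X' Y Y' : T} (eX : X ≅ X') (eY : Y ≅ Y')
    (h : ∀ f : X ⟶ Y, f = 0) (f : X' ⟶ Y') : f = 0 := by
  have h2 := h (eX.hom ≫ f ≫ eY.inv)
  calc f = eX.inv ≫ (eX.hom ≫ f ≫ eY.inv) ≫ eY.hom := by simp
  _ = 0 := by rw [h2, zero_comp, comp_zero]

/-- "All homs are zero" is preserved by shifting both sides. -/
lemma hom_zero_shift {X Y : T} (a : ℤ) (h : ∀ f : X ⟶ Y, f = 0)
    (f : X⟦a⟧ ⟶ Y⟦a⟧) : f = 0 := by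
  obtain ⟨g, rfl⟩ := (shiftFunctor T a).map_surjective f
  rw [h g, Functor.map_zero]

/-- In the singularity category, the syzygy is the desuspension. -/
lemma syz_iso (ι : A ⥤ T) (h : IsSingularityCategory ι) (N : A) :
    Nonempty (ι.obj (syz N) ≅ (ι.obj N)⟦(-1 : ℤ)⟧) := by
  have w : kernel.ι (Projective.π N) ≫ Projective.π N = 0 := kernel.condition _
  have hse : (ShortComplex.mk (kernel.ι (Projective.π N)) (Projective.π N) w).ShortExact :=
    { exact := ShortComplex.exact_of_f_is_kernel _ (kernelIsKernel _) }
  obtain ⟨c, hc⟩ := h.ses_triangle _ _ w hse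
  have hz : IsZero ((Triangle.mk (ι.map (kernel.ι (Projective.π N)))
      (ι.map (Projective.π N)) c).obj₂) :=
    h.proj_isZero _ (Projective.projective_over N)
  have : IsIso c := (Triangle.isZero₂_iff_isIso₃ _ hc).1 hz
  exact ⟨((shiftFunctorCompIsoId T (1 : ℤ) (-1 : ℤ) (by ring)).symm.app _) ≪≫
    (shiftFunctor T (-1 : ℤ)).mapIso (asIso c).symm⟩

/-- In the singularity category, iterated syzygies are desuspensions. -/
lemma syzPow_iso (ι : A ⥤ T) (h : IsSingularityCategory ι) (M : A) :
    ∀ k : ℕ, Nonempty (ι.obj (syzPow k M) ≅ (ι.obj M)⟦(-(k : ℤ))⟧)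
  | 0 => ⟨((shiftFunctorZero T ℤ).symm.app _) ≪≫
      eqToIso (by norm_num [syzPow])⟩
  | (k + 1) => by
    obtain ⟨e1⟩ := syz_iso ι h (syzPow k M)
    obtain ⟨e2⟩ := syzPow_iso ι h M k
    exact ⟨e1 ≪≫ (shiftFunctor T (-1 : ℤ)).mapIso e2 ≪≫
      ((shiftFunctorAdd' T (-(k : ℤ)) (-1 : ℤ) (-((k : ℕ) + 1 : ℕ) : ℤ)
        (by push_cast; ring)).symm.app _)⟩

/-- Covariant vanishing propagates through the extension closure. -/
lemma zero_to_extClosure (ι : A ⥤ T) (h : IsSingularityCategory ι) (M : A) (W : T)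
    (hM : ∀ f : W ⟶ ι.obj M, f = 0) :
    ∀ N : A, extClosure M N → ∀ f : W ⟶ ι.obj N, f = 0 := by
  intro N hN
  induction hN with
  | self => exact hM
  | proj P hP => exact fun f => (h.proj_isZero P hP).eq_of_tgt f 0
  | summand X' Y' s r hsr _ ih =>
    intro f
    have hsr' : ι.map s ≫ ι.map r = 𝟙 _ := by rw [← ι.map_comp, hsr, ι.map_id]
    calc f = (f ≫ ι.map s) ≫ ι.map r := by rw [Category.assoc, hsr', Category.comp_id]
    _ = 0 := by rw [ih (f ≫ ι.map s), zero_comp]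
  | ext X' Y' Z' f g w hse _ _ ih1 ih2 =>
    intro φ
    obtain ⟨c, hc⟩ := h.ses_triangle f g w hse
    obtain ⟨ψ, hψ⟩ := Triangle.coyoneda_exact₂ _ hc φ (ih2 _)
    rw [hψ, show ψ = 0 from ih1 ψ]; exact zero_comp

/-- Contravariant vanishing propagates through the extension closure. -/
lemma zero_from_extClosure (ι : A ⥤ T) (h : IsSingularityCategory ι) (M : A) (W : T)
    (hM : ∀ f : ι.obj M ⟶ W, f = 0) :
    ∀ N : A, extClosure M N → ∀ f : ι.obj N ⟶ W, f = 0 := by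
  intro N hN
  induction hN with
  | self => exact hM
  | proj P hP => exact fun f => (h.proj_isZero P hP).eq_of_src f 0
  | summand X' Y' s r hsr _ ih =>
    intro f
    have hsr' : ι.map s ≫ ι.map r = 𝟙 _ := by rw [← ι.map_comp, hsr, ι.map_id]
    calc f = ι.map s ≫ (ι.map r ≫ f) := by rw [← Category.assoc, hsr', Category.id_comp]
    _ = 0 := by rw [ih (ι.map r ≫ f), comp_zero]
  | ext X' Y' Z' f g w hse _ _ ih1 ih2 =>
    intro φ
    obtain ⟨ψ, hψ⟩ := Triangle.yoneda_exact₂ _ ((h.ses_triangle f g w hse).choose_spec) φ (ih1 _)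
    rw [hψ, show ψ = 0 from ih2 ψ]; exact comp_zero

/-- Non-vanishing theorem: for a virtually `d`-periodic object `M`, the Hom group
`Hom_{D_sg(A)}(M, Σ^{n d}(M))` is nonzero for every integer `n`. -/
theorem hom_shift_ne_zero (ι : A ⥤ T) (h : IsSingularityCategory ι)
    (M : A) (d : ℕ) (hd : 1 ≤ d) (hM : VirtuallyPeriodic d M) :
    ∀ n : ℤ, ∃ f : ι.obj M ⟶ (ι.obj M)⟦n * (d : ℤ)⟧, f ≠ 0 := by
  intro n
  by_contra hcon
  push_neg at hcon
  set X := ι.obj M with hX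
  set Z : ℤ → Prop := fun j => ∀ f : X ⟶ X⟦j⟧, f = 0 with hZdef
  have Zcongr : ∀ a b : ℤ, a = b → Z a → Z b := by rintro a b rfl; exact id
  have hXne : ¬ IsZero X := fun hz => hM.1 ((h.isZero_iff M).1 hz)
  obtain ⟨ed⟩ := syzPow_iso ι h M d
  have stepDown : ∀ j : ℤ, Z j → Z (j - d) := by
    intro j hj
    have h0 : ∀ f : X⟦(-j : ℤ)⟧ ⟶ X, f = 0 := fun f =>
      hom_zero_of_iso (Iso.refl _) ((shiftFunctorCompIsoId T j (-j) (by ring)).app X)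
        (hom_zero_shift (-j) hj) f
    have h1 := zero_to_extClosure ι h M _ h0 (syzPow d M) hM.2
    have h2 : ∀ f : X⟦(-j : ℤ)⟧ ⟶ X⟦(-(d : ℤ))⟧, f = 0 := fun f =>
      hom_zero_of_iso (Iso.refl _) ed h1 f
    intro f
    exact hom_zero_of_iso ((shiftFunctorCompIsoId T (-j) j (by ring)).app X)
      ((shiftFunctorAdd' T (-(d : ℤ)) j (j - d) (by ring)).symm.app X)
      (hom_zero_shift j h2) f
  have stepUp : ∀ j : ℤ, Z j → Z (j + d) := by
    intro j hj
    have h1 := zero_from_extClosure ι h M (X⟦j⟧) hj (syzPow d M) hM.2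
    have h2 : ∀ f : X⟦(-(d : ℤ))⟧ ⟶ X⟦j⟧, f = 0 := fun f =>
      hom_zero_of_iso ed (Iso.refl _) h1 f
    intro f
    exact hom_zero_of_iso ((shiftFunctorCompIsoId T (-(d : ℤ)) d (by ring)).app X)
      ((shiftFunctorAdd' T j d (j + d) rfl).symm.app X)
      (hom_zero_shift d h2) f
  have down : ∀ (k : ℕ) (j : ℤ), Z j → Z (j - k * d) := by
    intro k
    induction k with
    | zero => intro j hj; exact Zcongr j _ (by push_cast; ring) hj
    | succ k ih =>
      intro j hj
      exact Zcongr (j - k * d - d) _ (by push_cast; ring) (stepDown _ (ih j hj))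
  have up : ∀ (k : ℕ) (j : ℤ), Z j → Z (j + k * d) := by
    intro k
    induction k with
    | zero => intro j hj; exact Zcongr j _ (by push_cast; ring) hj
    | succ k ih =>
      intro j hj
      exact Zcongr (j + k * d + d) _ (by push_cast; ring) (stepUp _ (ih j hj))
  have hZ0 : Z 0 := by
    obtain ⟨k, hk | hk⟩ := Int.eq_nat_or_neg n
    · exact Zcongr _ _ (by rw [hk]; push_cast; ring) (down k (n * d) hcon)
    · exact Zcongr _ _ (by rw [hk]; push_cast; ring) (up k (n * d) hcon)
  have e0 : X ≅ X⟦(0 : ℤ)⟧ := (shiftFunctorZero T ℤ).symm.app X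
  have hzero : IsZero X := by
    rw [IsZero.iff_id_eq_zero, ← e0.hom_inv_id, hZ0 e0.hom, zero_comp]
  exact hXne hzero


end SingPaper
end
end

section
/- If an abelian category A with enough projectives contains a virtually d-periodic object for some d ≥ 1, then the singularity category D_sg(A) has no silting subcategory. -/
open CategoryTheory Limits Pretriangulated

noncomputable section

namespace SingPaper

variable {A : Type*} [Category A] [Abelian A] [EnoughProjectives A]

variable {T : Type*} [Category T] [Preadditive T] [HasZeroObject T] [HasShift T ℤ]
  [∀ n : ℤ, (shiftFunctor T n).Additive] [Pretriangulated T]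

/-- The class of objects of the smallest thick triangulated subcategory of `T`
containing the class of objects `S`: it is closed under isomorphisms, shifts,
direct summands and cones of morphisms between its objects. -/
inductive thickClosure (S : Set T) : T → Prop
  | of (X : T) : X ∈ S → thickClosure S X
  | zero (X : T) : IsZero X → thickClosure S X
  | iso (X Y : T) : (X ≅ Y) → thickClosure S X → thickClosure S Y
  | shift (X : T) (n : ℤ) : thickClosure S X → thickClosure S (X⟦n⟧)
  | summand (X Y : T) (s : X ⟶ Y) (r : Y ⟶ X) :
      s ≫ r = 𝟙 X → thickClosure S Y → thickClosure S X
  | cone (Tr : Triangle T) : Tr ∈ (distTriang T) →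
      thickClosure S Tr.obj₁ → thickClosure S Tr.obj₂ → thickClosure S Tr.obj₃

/-- A class of objects `S` of `T` (i.e. a full additive subcategory) is presilting if
`Hom(X, Y⟦n⟧) = 0` for all `X, Y ∈ S` and all `n > 0`. -/
def IsPresilting (S : Set T) : Prop :=
  ∀ X ∈ S, ∀ Y ∈ S, ∀ n : ℤ, 0 < n → ∀ f : X ⟶ Y⟦n⟧, f = 0

/-- A class of objects `S` is silting if it is presilting and generates `T` as a
thick triangulated subcategory. -/
def IsSilting (S : Set T) : Prop :=
  IsPresilting S ∧ ∀ X : T, thickClosure S X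


section Auxiliary
set_option linter.unusedSectionVars false

variable {T : Type*} [Category T] [Preadditive T] [HasZeroObject T] [HasShift T ℤ]
  [∀ n : ℤ, (shiftFunctor T n).Additive] [Pretriangulated T]

lemma vanish_iso {s W W' : T} (e : W ≅ W') (h : ∀ f : s ⟶ W', f = 0)
    (f : s ⟶ W) : f = 0 := by
  have h1 : f ≫ e.hom = 0 := h _
  have h2 : f = (f ≫ e.hom) ≫ e.inv := by simp
  rw [h2, h1, zero_comp]

lemma vanish_unshift {s W : T} (n : ℤ) (h : ∀ g : s ⟶ W⟦n⟧, g = 0)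
    (f : s⟦(-n : ℤ)⟧ ⟶ W) : f = 0 := by
  apply (shiftFunctor T n).map_injective
  have e := (shiftFunctorCompIsoId T (-n) n (by ring)).app s
  have h1 : e.inv ≫ (shiftFunctor T n).map f = 0 := h _
  have h2 : (shiftFunctor T n).map f = e.hom ≫ (e.inv ≫ (shiftFunctor T n).map f) := by simp
  rw [CategoryTheory.Functor.map_zero, h2, h1, comp_zero]

lemma vanish_shift {s W : T} (n : ℤ) (h : ∀ g : s⟦(-n : ℤ)⟧ ⟶ W, g = 0)
    (f : s ⟶ W⟦n⟧) : f = 0 := by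
  apply (shiftFunctor T (-n)).map_injective
  have e := (shiftFunctorCompIsoId T n (-n) (by ring)).app W
  have h1 : (shiftFunctor T (-n)).map f ≫ e.hom = 0 := h _
  have h2 : (shiftFunctor T (-n)).map f = ((shiftFunctor T (-n)).map f ≫ e.hom) ≫ e.inv := by simp
  rw [CategoryTheory.Functor.map_zero, h2, h1, zero_comp]

lemma vanish_src_shift {X N : T} (h : ∀ (n : ℤ) (g : X ⟶ N⟦n⟧), g = 0)
    (k n : ℤ) (g : X⟦k⟧ ⟶ N⟦n⟧) : g = 0 := by
  apply (shiftFunctor T (-k)).map_injective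
  have e1 := (shiftFunctorCompIsoId T k (-k) (by ring)).app X
  have e2 := ((shiftFunctorAdd' T n (-k) (n + -k) rfl).app N).symm
  have h1 : (e1.inv ≫ (shiftFunctor T (-k)).map g) ≫ e2.hom = 0 := h _ _
  have h2 : e1.inv ≫ (shiftFunctor T (-k)).map g = 0 := by
    have h3 : e1.inv ≫ (shiftFunctor T (-k)).map g =
        ((e1.inv ≫ (shiftFunctor T (-k)).map g) ≫ e2.hom) ≫ e2.inv := by simp
    rw [h3, h1, zero_comp]
  have h4 : (shiftFunctor T (-k)).map g =
      e1.hom ≫ (e1.inv ≫ (shiftFunctor T (-k)).map g) := by simp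
  rw [CategoryTheory.Functor.map_zero, h4, h2, comp_zero]

end Auxiliary

/-- Vanishing of `Hom(s, X⟦n⟧)` for all `s ∈ S` and `n > b`. -/
def Vanish {T : Type*} [Category T] [Preadditive T] [HasShift T ℤ] (S : Set T) (b : ℤ) (X : T) : Prop :=
  ∀ n : ℤ, b < n → ∀ s ∈ S, ∀ f : s ⟶ X⟦n⟧, f = 0

/-- If `A` contains a virtually `d`-periodic object for some `d ≥ 1`, then the
singularity category of `A` has no silting subcategory. -/
theorem no_silting_of_virtuallyPeriodic (ι : A ⥤ T)
    (h : IsSingularityCategory ι)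
    (hvp : ∃ (d : ℕ) (M : A), 1 ≤ d ∧ VirtuallyPeriodic d M) :
    ¬ ∃ S : Set T, IsSilting S := by
  rintro ⟨S, hpre, hgen⟩
  obtain ⟨d, M, hd, hinf, hext⟩ := hvp
  -- `N` is the image of `M` in the singularity category; it is nonzero.
  set N := ι.obj M with hN
  have hNz : ¬ IsZero N := fun hz => hinf ((h.isZero_iff M).1 hz)
  -- Step 1: a nonzero map from some `s₀ ∈ S` into some shift of `N`.
  have exists_nonzero : ∃ s ∈ S, ∃ (n : ℤ) (f : s ⟶ N⟦n⟧), f ≠ 0 := by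
    by_contra hc
    push_neg at hc
    have hall : ∀ {Z : T}, thickClosure S Z → ∀ (n : ℤ) (g : Z ⟶ N⟦n⟧), g = 0 := by
      intro Z hZ
      induction hZ with
      | of X hX => exact fun n g => hc X hX n g
      | zero X hz => exact fun n g => hz.eq_of_src g 0
      | iso X Y e hX ih =>
        intro n g
        have h1 : e.hom ≫ g = 0 := ih n _
        have h2 : g = e.inv ≫ (e.hom ≫ g) := by simp
        rw [h2, h1, comp_zero]
      | shift X m hX ih => exact fun n g => vanish_src_shift ih m n g
      | summand X Y sm rm hsr hY ih =>
        intro n g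
        have h1 : rm ≫ g = 0 := ih n _
        have h2 : g = sm ≫ (rm ≫ g) := by rw [← Category.assoc, hsr, Category.id_comp]
        rw [h2, h1, comp_zero]
      | cone Tr hTr h1 h2 ih1 ih2 =>
        intro n g
        have hg : Tr.mor₂ ≫ g = 0 := ih2 n _
        obtain ⟨u, hu⟩ := Triangle.yoneda_exact₃ Tr hTr g hg
        have hu0 : u = 0 := vanish_src_shift ih1 1 n u
        rw [hu, hu0, comp_zero]
    apply hNz
    rw [IsZero.iff_id_eq_zero]
    have h0 : (shiftFunctorZero T ℤ).inv.app N = 0 := hall (hgen N) 0 _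
    have h1 : 𝟙 N = (shiftFunctorZero T ℤ).inv.app N ≫ (shiftFunctorZero T ℤ).hom.app N := by
      simp
    rw [h1, h0, zero_comp]
  obtain ⟨s₀, hs₀, n₀, f₀, hf₀⟩ := exists_nonzero
  -- Step 2: every object of the thick closure has an upper vanishing bound.
  have exists_bound : ∀ {Z : T}, thickClosure S Z → ∃ b : ℤ, Vanish S b Z := by
    intro Z hZ
    induction hZ with
    | of X hX => exact ⟨0, fun n hn s hs f => hpre s hs X hX n hn f⟩
    | zero X hz =>
      exact ⟨0, fun n hn s hs f => ((shiftFunctor T n).map_isZero hz).eq_of_tgt f 0⟩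
    | iso X Y e hX ih =>
      obtain ⟨b, hb⟩ := ih
      exact ⟨b, fun n hn s hs f =>
        vanish_iso ((shiftFunctor T n).mapIso e.symm) (fun g => hb n hn s hs g) f⟩
    | shift X m hX ih =>
      obtain ⟨b, hb⟩ := ih
      refine ⟨b - m, fun n hn s hs f => ?_⟩
      exact vanish_iso ((shiftFunctorAdd' T m n (m + n) rfl).app X).symm
        (fun g => hb (m + n) (by omega) s hs g) f
    | summand X Y sm rm hsr hY ih =>
      obtain ⟨b, hb⟩ := ih
      refine ⟨b, fun n hn s hs f => ?_⟩
      have h1 : f ≫ (shiftFunctor T n).map sm = 0 := hb n hn s hs _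
      have h2 : f = f ≫ (shiftFunctor T n).map (sm ≫ rm) := by
        rw [hsr, CategoryTheory.Functor.map_id, Category.comp_id]
      rw [h2, CategoryTheory.Functor.map_comp, ← Category.assoc, h1, zero_comp]
    | cone Tr hTr ht1 ht2 ih1 ih2 =>
      obtain ⟨b₁, hb₁⟩ := ih1
      obtain ⟨b₂, hb₂⟩ := ih2
      refine ⟨max b₂ (b₁ - 1), fun n hn s hs f => ?_⟩
      refine vanish_shift n (fun g => ?_) f
      have hg2 : g ≫ Tr.mor₃ = 0 := by
        refine vanish_unshift n (fun u => ?_) _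
        exact vanish_iso ((shiftFunctorAdd' T 1 n (1 + n) rfl).app Tr.obj₁).symm
          (fun v => hb₁ (1 + n) (by omega) s hs v) u
      obtain ⟨v, hv⟩ := Triangle.coyoneda_exact₃ Tr hTr g hg2
      have hv0 : v = 0 := vanish_unshift n (fun u => hb₂ n (by omega) s hs u) v
      rw [hv, hv0, zero_comp]
  obtain ⟨b, hb⟩ := exists_bound (hgen N)
  -- Step 3: transfer of vanishing bounds through the extension closure.
  have ext_vanish : ∀ {c : ℤ}, Vanish S c N → ∀ {Y : A}, extClosure M Y →
      Vanish S c (ι.obj Y) := by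
    intro c hM Y hY
    induction hY with
    | self => exact hM
    | proj P hP =>
      exact fun n hn s hs f =>
        ((shiftFunctor T n).map_isZero (h.proj_isZero P hP)).eq_of_tgt f 0
    | summand X Y sm rm hsr hYY ih =>
      intro n hn s hs f
      have h1 : f ≫ (shiftFunctor T n).map (ι.map sm) = 0 := ih n hn s hs _
      have h2 : f = f ≫ (shiftFunctor T n).map (ι.map (sm ≫ rm)) := by
        rw [hsr, CategoryTheory.Functor.map_id, CategoryTheory.Functor.map_id, Category.comp_id]
      rw [h2, CategoryTheory.Functor.map_comp, CategoryTheory.Functor.map_comp, ← Category.assoc, h1, zero_comp]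
    | ext X Y Z fm gm w hse hX hZ ihX ihZ =>
      intro n hn s hs u
      obtain ⟨hmor, hTr⟩ := h.ses_triangle fm gm w hse
      refine vanish_shift n (fun g => ?_) u
      have hg : g ≫ (Triangle.mk (ι.map fm) (ι.map gm) hmor).mor₂ = 0 :=
        vanish_unshift n (fun v => ihZ n hn s hs v) _
      obtain ⟨v, hv⟩ := Triangle.coyoneda_exact₂ _ hTr g hg
      have hv0 : v = 0 := vanish_unshift n (fun w' => ihX n hn s hs w') v
      rw [hv, hv0, zero_comp]; rfl
  -- Step 4: a vanishing bound for `ι.obj (syz X)` descends to one for `ι.obj X`.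
  have syz_vanish : ∀ (X : A) (c : ℤ), Vanish S c (ι.obj (syz X)) →
      Vanish S (c - 1) (ι.obj X) := by
    intro X c hc
    have hse : (ShortComplex.mk (kernel.ι (Projective.π X)) (Projective.π X)
        (kernel.condition _)).ShortExact := by
      apply ShortComplex.ShortExact.mk'
      · exact ShortComplex.exact_of_f_is_kernel _ (kernelIsKernel (Projective.π X))
      · dsimp; infer_instance
      · dsimp; infer_instance
    obtain ⟨hmor, hTr⟩ := h.ses_triangle _ _ _ hse
    have hTr' := rot_of_distTriang _ hTr
    intro n hn s hs f
    refine vanish_shift n (fun g => ?_) f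
    have hg : g ≫ (Triangle.mk (ι.map (kernel.ι (Projective.π X)))
        (ι.map (Projective.π X)) hmor).rotate.mor₂ = 0 := by
      refine vanish_unshift n (fun u => ?_) _
      exact vanish_iso ((shiftFunctorAdd' T 1 n (1 + n) rfl).app (ι.obj (syz X))).symm
        (fun v => hc (1 + n) (by omega) s hs v) u
    obtain ⟨v, hv⟩ := Triangle.coyoneda_exact₂ _ hTr' g hg
    have hv0 : v = 0 := (h.proj_isZero (Projective.over X) inferInstance).eq_of_tgt v 0
    rw [hv, hv0, zero_comp]; rfl
  -- Iterate over syzygies.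
  have syzPow_vanish : ∀ (k : ℕ) (c : ℤ), Vanish S c (ι.obj (syzPow k M)) →
      Vanish S (c - k) N := by
    intro k
    induction k with
    | zero => intro c hc; have hc' : Vanish S c N := hc; simpa using hc'
    | succ k ih =>
      intro c hc
      have h1 : Vanish S (c - 1) (ι.obj (syzPow k M)) := syz_vanish _ c hc
      have h2 : Vanish S (c - 1 - k) N := ih _ h1
      have e : c - ((k : ℤ) + 1) = c - 1 - k := by ring
      rw [show ((k + 1 : ℕ) : ℤ) = (k : ℤ) + 1 by push_cast; ring, e]
      exact h2
  -- Step 5: descend the bound indefinitely.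
  have key : ∀ k : ℕ, Vanish S (b - k * d) N := by
    intro k
    induction k with
    | zero => simpa using hb
    | succ k ih =>
      have h1 : Vanish S (b - k * d) (ι.obj (syzPow d M)) := ext_vanish ih hext
      have h2 : Vanish S (b - k * d - d) N := syzPow_vanish d _ h1
      have e : b - ((k : ℤ) + 1) * d = b - k * d - d := by ring
      rw [show ((k + 1 : ℕ) : ℤ) = (k : ℤ) + 1 by push_cast; ring, e]
      exact h2
  -- Choose `k` large enough and derive the contradiction.
  set k : ℕ := (b - n₀).toNat + 1 with hk
  have hk1 : b - n₀ ≤ ((b - n₀).toNat : ℤ) := Int.self_le_toNat _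
  have hd' : (1 : ℤ) ≤ (d : ℤ) := by exact_mod_cast hd
  have hkd : (k : ℤ) ≤ (k : ℤ) * d :=
    le_mul_of_one_le_right (by positivity) hd'
  have hlt : b - (k : ℤ) * d < n₀ := by
    have : ((b - n₀).toNat : ℤ) + 1 ≤ (k : ℤ) := by
      rw [hk]; push_cast; omega
    omega
  exact hf₀ (key k n₀ hlt s₀ hs₀ f₀)


end SingPaper
end
end

section
/- If M is an ultimately-closed object of an abelian category A with enough projectives and M has infinite projective dimension, then the object E = M ⊕ Ω(M) ⊕ ⋯ ⊕ Ω^{d-1}(M) is virtually 1-periodic, where d is the integer witnessing ultimate closedness. -/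
open CategoryTheory Limits Pretriangulated

noncomputable section

namespace SingPaper

variable {A : Type*} [Category A] [Abelian A] [EnoughProjectives A]

attribute [local instance] Abelian.hasFiniteBiproducts

/-- `Y` belongs to `add X`: it is a direct summand of a finite direct sum of copies
of `X`. -/
def inAdd (X Y : A) : Prop :=
  ∃ (n : ℕ) (s : Y ⟶ ⨁ (fun _ : Fin n => X)) (r : (⨁ fun _ : Fin n => X) ⟶ Y),
    s ≫ r = 𝟙 Y

/-- `X` and `Y` are isomorphic in the stable category `A` modulo projectives:
they become isomorphic after adding projective direct summands. -/
def StablyIso (X Y : A) : Prop :=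
  ∃ P Q : A, Projective P ∧ Projective Q ∧ Nonempty (X ⊞ P ≅ Y ⊞ Q)

/-- `syzSum M e = M ⊕ Ω(M) ⊕ ⋯ ⊕ Ω^e(M)`. -/
def syzSum (M : A) : ℕ → A
  | 0 => M
  | n + 1 => syzSum M n ⊞ syzPow (n + 1) M

/-- `M` is ultimately-closed: there is `d ≥ 1` such that `Ω^d(M)` is stably
isomorphic to an object of `add (M ⊕ Ω(M) ⊕ ⋯ ⊕ Ω^{d-1}(M))`. -/
def UltimatelyClosed (M : A) : Prop :=
  ∃ d : ℕ, 1 ≤ d ∧ ∃ X : A, inAdd (syzSum M (d - 1)) X ∧ StablyIso (syzPow d M) X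
section Aux
set_option linter.unusedSectionVars false
open ZeroObject

lemma projective_of_retract {X Y : A} (hY : Projective Y) (s : X ⟶ Y) (r : Y ⟶ X)
    (h : s ≫ r = 𝟙 X) : Projective X where
  factors := fun {E} {X'} f e he => by
    haveI := he
    obtain ⟨g, hg⟩ := hY.factors (r ≫ f) e
    exact ⟨s ≫ g, by rw [Category.assoc, hg, ← Category.assoc, h, Category.id_comp]⟩

lemma projective_of_isZero {X : A} (h : IsZero X) : Projective X :=
  projective_of_retract (inferInstance : Projective (0 : A)) (h.to_ 0) ((isZero_zero A).to_ X)
    (h.eq_of_src _ _)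

/-- The kernel of `pullback.fst f g` is a kernel of `g`. -/
def kernelPullbackFstIsLimit {P Q N : A} (f : P ⟶ N) (g : Q ⟶ N) :
    IsLimit (KernelFork.ofι (pullback.lift (0 : kernel g ⟶ P) (kernel.ι g) (by simp))
      (show pullback.lift (0 : kernel g ⟶ P) (kernel.ι g) (by simp) ≫ pullback.fst f g = 0 by
        exact pullback.lift_fst _ _ _)) := by
  refine KernelFork.IsLimit.ofι _ _
    (fun {W'} m hm => kernel.lift g (m ≫ pullback.snd f g)
      (by rw [Category.assoc, ← pullback.condition, ← Category.assoc, hm, zero_comp]))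
    (fun {W'} m hm => ?_) (fun {W'} m hm b hb => ?_)
  · apply pullback.hom_ext
    · rw [Category.assoc, pullback.lift_fst, comp_zero, hm]
    · rw [Category.assoc, pullback.lift_snd, kernel.lift_ι]
  · rw [← cancel_mono (kernel.ι g)]
    have h1 : (pullback.lift (0 : kernel g ⟶ P) (kernel.ι g) (by simp)) ≫ pullback.snd f g =
        kernel.ι g := by exact pullback.lift_snd _ _ _
    rw [kernel.lift_ι, ← h1, ← Category.assoc, hb]

/-- `kernel (pullback.fst f g) ≅ kernel g`. -/
def kernelPullbackFstIso {P Q N : A} (f : P ⟶ N) (g : Q ⟶ N) :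
    kernel (pullback.fst f g) ≅ kernel g :=
  IsLimit.conePointUniqueUpToIso (kernelIsKernel _) (kernelPullbackFstIsLimit f g)

lemma pullback_iso_of_projective {P Q N : A} (hP : Projective P) (f : P ⟶ N) (g : Q ⟶ N)
    [Epi g] : Nonempty (pullback f g ≅ kernel g ⊞ P) := by
  haveI := hP
  haveI : Epi (pullback.fst f g) := inferInstance
  set S := ShortComplex.mk (kernel.ι (pullback.fst f g)) (pullback.fst f g)
    (kernel.condition _) with hS
  have hex : S.Exact := ShortComplex.exact_of_f_is_kernel S (kernelIsKernel _)
  have spl := ShortComplex.Splitting.ofExactOfSection S hex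
    (Projective.factorThru (𝟙 P) (pullback.fst f g)) (Projective.factorThru_comp _ _)
    inferInstance
  exact ⟨spl.isoBinaryBiproduct ≪≫ biprod.mapIso (kernelPullbackFstIso f g) (Iso.refl _)⟩

/-- Schanuel's lemma. -/
lemma schanuel {N P Q : A} (hP : Projective P) (hQ : Projective Q)
    (f : P ⟶ N) (g : Q ⟶ N) (hf : Epi f) (hg : Epi g) :
    Nonempty (kernel f ⊞ Q ≅ kernel g ⊞ P) := by
  haveI := hf; haveI := hg
  obtain ⟨e₁⟩ := pullback_iso_of_projective hP f g
  obtain ⟨e₂⟩ := pullback_iso_of_projective hQ g f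
  exact ⟨e₂.symm ≪≫ pullbackSymmetry g f ≪≫ e₁⟩


/-- The kernel of `biprod.map u v` is `kernel u ⊞ kernel v`. -/
def kernelBiprodMapIsLimit {X Y X' Y' : A} (u : X ⟶ Y) (v : X' ⟶ Y') :
    IsLimit (KernelFork.ofι (biprod.map (kernel.ι u) (kernel.ι v))
      (show biprod.map (kernel.ι u) (kernel.ι v) ≫ biprod.map u v = 0 by ext <;> simp)) := by
  refine KernelFork.IsLimit.ofι _ _
    (fun {W'} m hm => biprod.lift
      (kernel.lift u (m ≫ biprod.fst)
        (by rw [Category.assoc, ← biprod.map_fst u v, ← Category.assoc, hm, zero_comp]))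
      (kernel.lift v (m ≫ biprod.snd)
        (by rw [Category.assoc, ← biprod.map_snd u v, ← Category.assoc, hm, zero_comp])))
    (fun {W'} m hm => by ext <;> simp) (fun {W'} m hm b hb => ?_)
  · apply biprod.hom_ext
    · rw [← cancel_mono (kernel.ι u)]
      simp only [Category.assoc, biprod.lift_fst, kernel.lift_ι]
      rw [← biprod.map_fst (kernel.ι u) (kernel.ι v), ← Category.assoc, hb]
    · rw [← cancel_mono (kernel.ι v)]
      simp only [Category.assoc, biprod.lift_snd, kernel.lift_ι]
      rw [← biprod.map_snd (kernel.ι u) (kernel.ι v), ← Category.assoc, hb]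

def kernelBiprodMapIso {X Y X' Y' : A} (u : X ⟶ Y) (v : X' ⟶ Y') :
    kernel (biprod.map u v) ≅ kernel u ⊞ kernel v :=
  IsLimit.conePointUniqueUpToIso (kernelIsKernel _) (kernelBiprodMapIsLimit u v)

lemma stablyIso_refl (X : A) : StablyIso X X :=
  ⟨0, 0, inferInstance, inferInstance, ⟨Iso.refl _⟩⟩

lemma stablyIso_symm {X Y : A} (h : StablyIso X Y) : StablyIso Y X := by
  obtain ⟨P, Q, hP, hQ, ⟨e⟩⟩ := h
  exact ⟨Q, P, hQ, hP, ⟨e.symm⟩⟩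

lemma stablyIso_trans {X Y Z : A} (h₁ : StablyIso X Y) (h₂ : StablyIso Y Z) :
    StablyIso X Z := by
  obtain ⟨P, Q, hP, hQ, ⟨e₁⟩⟩ := h₁
  obtain ⟨P', Q', hP', hQ', ⟨e₂⟩⟩ := h₂
  haveI := hP; haveI := hQ; haveI := hP'; haveI := hQ'
  refine ⟨P ⊞ P', Q' ⊞ Q, inferInstance, inferInstance, ⟨?_⟩⟩
  calc X ⊞ (P ⊞ P') ≅ (X ⊞ P) ⊞ P' := (biprod.associator _ _ _).symm
    _ ≅ (Y ⊞ Q) ⊞ P' := biprod.mapIso e₁ (Iso.refl _)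
    _ ≅ Y ⊞ (Q ⊞ P') := biprod.associator _ _ _
    _ ≅ Y ⊞ (P' ⊞ Q) := biprod.mapIso (Iso.refl _) (biprod.braiding _ _)
    _ ≅ (Y ⊞ P') ⊞ Q := (biprod.associator _ _ _).symm
    _ ≅ (Z ⊞ Q') ⊞ Q := biprod.mapIso e₂ (Iso.refl _)
    _ ≅ Z ⊞ (Q' ⊞ Q) := biprod.associator _ _ _

lemma stablyIso_biprod {X Y X' Y' : A} (h : StablyIso X Y) (h' : StablyIso X' Y') :
    StablyIso (X ⊞ X') (Y ⊞ Y') := by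
  obtain ⟨P, Q, hP, hQ, ⟨e⟩⟩ := h
  obtain ⟨P', Q', hP', hQ', ⟨e'⟩⟩ := h'
  haveI := hP; haveI := hQ; haveI := hP'; haveI := hQ'
  refine ⟨P ⊞ P', Q ⊞ Q', inferInstance, inferInstance, ⟨?_⟩⟩
  calc (X ⊞ X') ⊞ (P ⊞ P') ≅ (X ⊞ P) ⊞ (X' ⊞ P') := by
        exact ⟨biprod.lift (biprod.lift (biprod.fst ≫ biprod.fst) (biprod.snd ≫ biprod.fst))
            (biprod.lift (biprod.fst ≫ biprod.snd) (biprod.snd ≫ biprod.snd)),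
          biprod.lift (biprod.lift (biprod.fst ≫ biprod.fst) (biprod.snd ≫ biprod.fst))
            (biprod.lift (biprod.fst ≫ biprod.snd) (biprod.snd ≫ biprod.snd)),
          by ext <;> simp, by ext <;> simp⟩
    _ ≅ (Y ⊞ Q) ⊞ (Y' ⊞ Q') := biprod.mapIso e e'
    _ ≅ (Y ⊞ Y') ⊞ (Q ⊞ Q') := by
        exact ⟨biprod.lift (biprod.lift (biprod.fst ≫ biprod.fst) (biprod.snd ≫ biprod.fst))
            (biprod.lift (biprod.fst ≫ biprod.snd) (biprod.snd ≫ biprod.snd)),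
          biprod.lift (biprod.lift (biprod.fst ≫ biprod.fst) (biprod.snd ≫ biprod.fst))
            (biprod.lift (biprod.fst ≫ biprod.snd) (biprod.snd ≫ biprod.snd)),
          by ext <;> simp, by ext <;> simp⟩

lemma stablyIso_syz_biprod (N N' : A) : StablyIso (syz (N ⊞ N')) (syz N ⊞ syz N') := by
  obtain ⟨e⟩ := schanuel (inferInstance : Projective (Projective.over (N ⊞ N')))
    (inferInstance : Projective (Projective.over N ⊞ Projective.over N'))
    (Projective.π (N ⊞ N')) (biprod.map (Projective.π N) (Projective.π N'))
    inferInstance inferInstance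
  exact ⟨Projective.over N ⊞ Projective.over N', Projective.over (N ⊞ N'), inferInstance,
    inferInstance, ⟨e ≪≫ biprod.mapIso (kernelBiprodMapIso _ _) (Iso.refl _)⟩⟩

lemma stablyIso_syz_of_iso {X Y : A} (e : X ≅ Y) : StablyIso (syz X) (syz Y) := by
  haveI : Epi (Projective.π Y ≫ e.inv) := epi_comp _ _
  obtain ⟨i⟩ := schanuel (inferInstance : Projective (Projective.over X))
    (inferInstance : Projective (Projective.over Y))
    (Projective.π X) (Projective.π Y ≫ e.inv) inferInstance inferInstance
  exact ⟨Projective.over Y, Projective.over X, inferInstance, inferInstance,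
    ⟨i ≪≫ biprod.mapIso (kernelCompMono (Projective.π Y) e.inv) (Iso.refl _)⟩⟩

lemma projective_syz {P : A} (hP : Projective P) : Projective (syz P) := by
  haveI := hP
  set S := ShortComplex.mk (kernel.ι (Projective.π P)) (Projective.π P)
    (kernel.condition _) with hS
  have hex : S.Exact := ShortComplex.exact_of_f_is_kernel S (kernelIsKernel _)
  have spl := ShortComplex.Splitting.ofExactOfSection S hex
    (Projective.factorThru (𝟙 P) (Projective.π P)) (Projective.factorThru_comp _ _)
    inferInstance
  exact projective_of_retract (Projective.projective_over P) (kernel.ι _) spl.r spl.f_r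
/-- `N` is a retract of `E ⊞ P` for some projective `P`. -/
def RetP (N E : A) : Prop :=
  ∃ P : A, Projective P ∧ ∃ (s : N ⟶ E ⊞ P) (r : E ⊞ P ⟶ N), s ≫ r = 𝟙 N

lemma retP_of_retract {N E : A} (s : N ⟶ E) (r : E ⟶ N) (h : s ≫ r = 𝟙 N) : RetP N E :=
  ⟨0, inferInstance, s ≫ biprod.inl, biprod.fst ≫ r,
    by rw [Category.assoc, biprod.inl_fst_assoc, h]⟩

lemma retP_syz {N E : A} (h : RetP N E) : RetP (syz N) (syz E) := by
  obtain ⟨P, hPproj, s, r, hsr⟩ := h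
  -- complement of `N` inside `E ⊞ P`
  haveI : IsSplitEpi r := ⟨⟨⟨s, hsr⟩⟩⟩
  set S := ShortComplex.mk (kernel.ι r) r (kernel.condition r) with hS
  have hex : S.Exact := ShortComplex.exact_of_f_is_kernel S (kernelIsKernel _)
  have spl := ShortComplex.Splitting.ofExactOfSection S hex s hsr inferInstance
  have e₀ : E ⊞ P ≅ kernel r ⊞ N := spl.isoBinaryBiproduct
  have h₁ : StablyIso (syz E ⊞ syz P) (syz (kernel r) ⊞ syz N) :=
    stablyIso_trans (stablyIso_symm (stablyIso_syz_biprod E P))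
      (stablyIso_trans (stablyIso_syz_of_iso e₀) (stablyIso_syz_biprod _ _))
  obtain ⟨U, V, hU, hV, ⟨e⟩⟩ := h₁
  haveI := hU
  haveI := projective_syz hPproj
  refine ⟨syz P ⊞ U, inferInstance,
    (biprod.inr ≫ biprod.inl) ≫ e.symm.hom ≫ (biprod.associator _ _ _).hom,
    (biprod.associator _ _ _).inv ≫ e.symm.inv ≫ (biprod.fst ≫ biprod.snd), ?_⟩
  simp only [Category.assoc, Iso.symm_hom, Iso.symm_inv, Iso.hom_inv_id_assoc,
    Iso.inv_hom_id_assoc, biprod.inl_fst_assoc, biprod.inr_snd]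

lemma retP_syzPow {N E : A} (h : RetP N E) : ∀ n, RetP (syzPow n N) (syzPow n E)
  | 0 => h
  | n + 1 => retP_syz (retP_syzPow h n)

lemma projective_of_retP {N E : A} (hE : Projective E) (h : RetP N E) : Projective N := by
  obtain ⟨P, hP, s, r, hsr⟩ := h
  haveI := hE; haveI := hP
  exact projective_of_retract inferInstance s r hsr

lemma retract_syzSum (M : A) :
    ∀ e j, j ≤ e →
      ∃ (s : syzPow j M ⟶ syzSum M e) (r : syzSum M e ⟶ syzPow j M), s ≫ r = 𝟙 _
  | 0, j, hj => by
    obtain rfl : j = 0 := Nat.le_zero.mp hj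
    exact ⟨𝟙 _, 𝟙 _, Category.id_comp _⟩
  | e + 1, j, hj => by
    rcases Nat.lt_or_ge j (e + 1) with h | h
    · obtain ⟨s, r, hsr⟩ := retract_syzSum M e j (Nat.lt_succ_iff.mp h)
      exact ⟨s ≫ biprod.inl, biprod.fst ≫ r, by dsimp only [syzSum]; rw [Category.assoc, biprod.inl_fst_assoc, hsr]⟩
    · obtain rfl : j = e + 1 := le_antisymm hj h
      exact ⟨biprod.inr, biprod.snd, biprod.inr_snd⟩
def finSuccBiproductIso (X : A) (n : ℕ) :
    (⨁ fun _ : Fin (n + 1) => X) ≅ X ⊞ ⨁ fun _ : Fin n => X where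
  hom := biprod.lift (biproduct.π (fun _ : Fin (n + 1) => X) 0)
    (biproduct.lift fun i : Fin n => biproduct.π (fun _ : Fin (n + 1) => X) i.succ)
  inv := biprod.desc (biproduct.ι (fun _ : Fin (n + 1) => X) 0)
    (biproduct.desc fun i : Fin n => biproduct.ι (fun _ : Fin (n + 1) => X) i.succ)
  hom_inv_id := by
    apply biproduct.hom_ext'
    intro j
    apply biproduct.hom_ext
    intro k
    induction j using Fin.cases <;> induction k using Fin.cases <;>
      simp [biproduct.lift_desc, Preadditive.sum_comp, Preadditive.comp_sum,
        biproduct.ι_π_assoc, biproduct.ι_π, Fin.succ_ne_zero, (Fin.succ_ne_zero _).symm,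
        Fin.succ_inj, Finset.sum_ite_eq, Finset.sum_ite_eq', ite_comp, comp_ite]
  inv_hom_id := by
    ext <;> simp [biproduct.ι_π, Fin.succ_ne_zero, (Fin.succ_ne_zero _).symm, Fin.succ_inj]
lemma extClosure_of_iso {B X Y : A} (e : X ≅ Y) (h : extClosure B Y) : extClosure B X :=
  extClosure.summand X Y e.hom e.inv e.hom_inv_id h

lemma extClosure_biprod {B X Y : A} (hX : extClosure B X) (hY : extClosure B Y) :
    extClosure B (X ⊞ Y) := by
  have spl := ShortComplex.Splitting.ofHasBinaryBiproduct (C := A) X Y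
  exact extClosure.ext X (X ⊞ Y) Y biprod.inl biprod.snd (by simp)
    (ShortComplex.ShortExact.mk' spl.exact spl.mono_f spl.epi_g) hX hY

lemma extClosure_finBiproduct {B X : A} (h : extClosure B X) :
    ∀ n : ℕ, extClosure B (⨁ fun _ : Fin n => X)
  | 0 => extClosure.proj _ (projective_of_isZero (by
      rw [IsZero.iff_id_eq_zero]
      apply biproduct.hom_ext
      intro j
      exact j.elim0))
  | n + 1 =>
    extClosure_of_iso (finSuccBiproductIso X n)
      (extClosure_biprod h (extClosure_finBiproduct h n))

lemma extClosure_of_stablyIso {B Y Z : A} (hst : StablyIso Z Y) (h : extClosure B Y) :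
    extClosure B Z := by
  obtain ⟨P, Q, hP, hQ, ⟨e⟩⟩ := hst
  have hYQ : extClosure B (Y ⊞ Q) := extClosure_biprod h (extClosure.proj Q hQ)
  have hZP : extClosure B (Z ⊞ P) := extClosure_of_iso e hYQ
  exact extClosure.summand Z (Z ⊞ P) biprod.inl biprod.fst biprod.inl_fst hZP

end Aux

/-- If `M` is ultimately-closed with witness `d ≥ 1` and `M` has infinite projective
dimension, then `E = M ⊕ Ω(M) ⊕ ⋯ ⊕ Ω^{d-1}(M)` is virtually `1`-periodic. -/
theorem virtuallyPeriodic_of_ultimatelyClosed (M : A) (hpd : ¬ HasFiniteProjDim M)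
    (d : ℕ) (hd : 1 ≤ d) (X : A) (hX : inAdd (syzSum M (d - 1)) X)
    (hst : StablyIso (syzPow d M) X) :
    VirtuallyPeriodic 1 (syzSum M (d - 1)) := by
  set E := syzSum M (d - 1) with hE
  refine ⟨?_, ?_⟩
  · rintro ⟨n, hn⟩
    obtain ⟨s, r, hsr⟩ := retract_syzSum M (d - 1) 0 (Nat.zero_le _)
    exact hpd ⟨n, projective_of_retP hn (retP_syzPow (retP_of_retract s r hsr) n)⟩
  · show extClosure E (syz E)
    have hj : ∀ j : ℕ, 1 ≤ j → j ≤ d → extClosure E (syzPow j M) := by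
      intro j h1 h2
      rcases Nat.lt_or_ge j d with h | h
      · obtain ⟨s, r, hsr⟩ := retract_syzSum M (d - 1) j (by omega)
        exact extClosure.summand _ E s r hsr extClosure.self
      · obtain rfl : j = d := le_antisymm h2 h
        obtain ⟨m, s, r, hsr⟩ := hX
        have hXcl : extClosure E X :=
          extClosure.summand X _ s r hsr (extClosure_finBiproduct extClosure.self m)
        exact extClosure_of_stablyIso hst hXcl
    have key : ∀ k : ℕ, k + 1 ≤ d → extClosure E (syz (syzSum M k)) := by
      intro k
      induction k with
      | zero => exact fun hk => hj 1 le_rfl hk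
      | succ k ih =>
        intro hk
        have h1 : extClosure E (syz (syzSum M k)) := ih (by omega)
        have h2 : extClosure E (syzPow (k + 2) M) := hj (k + 2) (by omega) hk
        exact extClosure_of_stablyIso
          (stablyIso_syz_biprod (syzSum M k) (syzPow (k + 1) M))
          (extClosure_biprod h1 h2)
    exact key (d - 1) (by omega)

end SingPaper
end
end

section
/- Let A be an abelian category with enough projectives that is ultimately-closed (every object is ultimately-closed). Then the singularity category D_sg(A) has no nonzero presilting object: every object X of D_sg(A) with Hom(X, Σ^n X) = 0 for all n > 0 is a zero object. -/
open CategoryTheory Limits Pretriangulated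

noncomputable section

namespace SingPaper

variable {A : Type*} [Category A] [Abelian A] [EnoughProjectives A]

attribute [local instance] Abelian.hasFiniteBiproducts

variable {T : Type*} [Category T] [Preadditive T] [HasZeroObject T] [HasShift T ℤ]
  [∀ n : ℤ, (shiftFunctor T n).Additive] [Pretriangulated T]

/-- Auxiliary vanishing lemma: if `Y` has no positive self-extensions and `Z⟦i⟧ ≅ Y`,
then any map `Y ⟶ Z⟦k⟧` with `i < k` vanishes. -/
private lemma vanish_aux {Y Z : T} (hY : ∀ m : ℤ, 0 < m → ∀ f : Y ⟶ Y⟦m⟧, f = 0)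
    (i : ℤ) (e : Z⟦i⟧ ≅ Y) (k : ℤ) (hik : i < k) (f : Y ⟶ Z⟦k⟧) : f = 0 := by
  set m := k - i with hm
  have hm0 : 0 < m := by omega
  have c : Z⟦k⟧ ≅ (Z⟦i⟧)⟦m⟧ := (shiftFunctorAdd' T i m k (by omega)).app Z
  have h0 : f ≫ c.hom ≫ (shiftFunctor T m).map e.hom = 0 := hY m hm0 _
  have h1 : f = (f ≫ c.hom ≫ (shiftFunctor T m).map e.hom) ≫
      ((shiftFunctor T m).map e.inv ≫ c.inv) := by
    simp [← Functor.map_comp]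
  rw [h1, h0, zero_comp]

/-- If `A` is ultimately-closed, then the singularity category of `A` has no nonzero
presilting object: any object with no positive self-extensions is zero. -/
theorem presilting_isZero_of_ultimatelyClosed (huc : ∀ M : A, UltimatelyClosed M)
    (ι : A ⥤ T) (h : IsSingularityCategory ι)
    (X : T) (hX : ∀ n : ℤ, 0 < n → ∀ f : X ⟶ X⟦n⟧, f = 0) :
    IsZero X := by
  obtain ⟨M, n, ⟨eX⟩⟩ := h.obj_surj X
  -- the stalk of `M` is presilting
  have hYpre : ∀ m : ℤ, 0 < m → ∀ f : ι.obj M ⟶ (ι.obj M)⟦m⟧, f = 0 := by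
    intro m hm f
    have hq : eX.hom ≫ (shiftFunctor T n).map f ≫ (shiftComm (ι.obj M) m n).hom ≫
        (shiftFunctor T m).map eX.inv = 0 := hX m hm _
    have h2 : eX.hom ≫ (shiftFunctor T n).map f = 0 := by
      have h2' := hq =≫ ((shiftFunctor T m).map eX.hom ≫ (shiftComm (ι.obj M) m n).inv)
      simpa [← Functor.map_comp] using h2'
    have h3 : (shiftFunctor T n).map f = 0 := by
      simpa using eX.inv ≫= h2
    exact (shiftFunctor T n).map_injective (by rw [h3, Functor.map_zero])
  -- the syzygy triangle isomorphism
  have sIso : ∀ N : A, Nonempty (ι.obj N ≅ (ι.obj (syz N))⟦(1:ℤ)⟧) := by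
    intro N
    obtain ⟨con, htri⟩ := h.ses_triangle (kernel.ι (Projective.π N)) (Projective.π N)
      (kernel.condition _)
      { exact := ShortComplex.exact_of_f_is_kernel _ (kernelIsKernel _) }
    have : IsIso con := (Triangle.isZero₂_iff_isIso₃ _ htri).1
      (h.proj_isZero _ (Projective.projective_over N))
    exact ⟨@asIso _ _ _ _ con this⟩
  have sPowIso : ∀ i : ℕ, Nonempty (ι.obj M ≅ (ι.obj (syzPow i M))⟦(i : ℤ)⟧) := by
    intro i
    induction i with
    | zero => exact ⟨(shiftFunctorZero T ℤ).symm.app (ι.obj M)⟩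
    | succ i ih =>
      obtain ⟨e0⟩ := ih
      obtain ⟨e1⟩ := sIso (syzPow i M)
      exact ⟨e0 ≪≫ (shiftFunctor T (i:ℤ)).mapIso e1 ≪≫
        (shiftFunctorAdd' T 1 (i:ℤ) ((i+1:ℕ):ℤ) (by push_cast; ring)).symm.app _⟩
  obtain ⟨d, hd1, X', ⟨nn, s, r, hsr⟩, Pp, Qq, hPp, hQq, ⟨eiso⟩⟩ := huc M
  -- the basic vanishing results
  have hPsyz : ∀ i : ℕ, i < d → ∀ k : ℤ, (d:ℤ) ≤ k →
      ∀ f : ι.obj M ⟶ (ι.obj (syzPow i M))⟦k⟧, f = 0 := by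
    intro i hi k hk f
    obtain ⟨e⟩ := sPowIso i
    have hik : (i:ℤ) < k := by
      have : (i:ℤ) < (d:ℤ) := by exact_mod_cast hi
      omega
    exact vanish_aux hYpre (i:ℤ) e.symm k hik f
  have hPproj : ∀ N : A, Projective N → ∀ k : ℤ,
      ∀ f : ι.obj M ⟶ (ι.obj N)⟦k⟧, f = 0 := by
    intro N hN k f
    exact ((shiftFunctor T k).map_isZero (h.proj_isZero N hN)).eq_of_tgt f 0
  have hPretract : ∀ (N N' : A),
      (∀ k : ℤ, (d:ℤ) ≤ k → ∀ f : ι.obj M ⟶ (ι.obj N')⟦k⟧, f = 0) →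
      ∀ (s' : N ⟶ N') (r' : N' ⟶ N), s' ≫ r' = 𝟙 N →
      ∀ k : ℤ, (d:ℤ) ≤ k → ∀ f : ι.obj M ⟶ (ι.obj N)⟦k⟧, f = 0 := by
    intro N N' hN' s' r' hsr' k hk f
    have hfe : f = (f ≫ (shiftFunctor T k).map (ι.map s')) ≫
        (shiftFunctor T k).map (ι.map r') := by
      rw [Category.assoc, ← Functor.map_comp, ← Functor.map_comp, hsr', ι.map_id]
      simp
    rw [hfe, hN' k hk (f ≫ (shiftFunctor T k).map (ι.map s')), zero_comp]
  have hPext : ∀ (A₁ A₂ A₃ : A) (f : A₁ ⟶ A₂) (g : A₂ ⟶ A₃) (w : f ≫ g = 0),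
      (ShortComplex.mk f g w).ShortExact →
      (∀ k : ℤ, (d:ℤ) ≤ k → ∀ φ : ι.obj M ⟶ (ι.obj A₁)⟦k⟧, φ = 0) →
      (∀ k : ℤ, (d:ℤ) ≤ k → ∀ φ : ι.obj M ⟶ (ι.obj A₃)⟦k⟧, φ = 0) →
      ∀ k : ℤ, (d:ℤ) ≤ k → ∀ φ : ι.obj M ⟶ (ι.obj A₂)⟦k⟧, φ = 0 := by
    intro A₁ A₂ A₃ f g w hse h1 h3 k hk φ
    obtain ⟨con, htri⟩ := h.ses_triangle f g w hse
    have htri' := Pretriangulated.Triangle.shift_distinguished _ htri k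
    rw [Triangle.shiftFunctor_eq] at htri'
    have hφ2 : φ ≫ ((Triangle.shiftFunctor T k).obj
        (Triangle.mk (ι.map f) (ι.map g) con)).mor₂ = 0 := by
      show φ ≫ (k.negOnePow • ((ι.map g)⟦k⟧')) = 0
      rw [Linear.comp_units_smul, h3 k hk (φ ≫ (shiftFunctor T k).map (ι.map g)), smul_zero]
    obtain ⟨ψ, hψ⟩ := Pretriangulated.Triangle.coyoneda_exact₂ _ htri' φ hφ2
    rw [hψ, h1 k hk ψ]; exact zero_comp
  have hbiSE : ∀ X₁ X₂ : A, (ShortComplex.mk (biprod.inl : X₁ ⟶ X₁ ⊞ X₂)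
      (biprod.snd : X₁ ⊞ X₂ ⟶ X₂) (by simp)).ShortExact := fun X₁ X₂ =>
    (ShortComplex.Splitting.ofHasBinaryBiproduct X₁ X₂).shortExact
  have hPbiprod : ∀ (A₁ A₂ : A),
      (∀ k : ℤ, (d:ℤ) ≤ k → ∀ φ : ι.obj M ⟶ (ι.obj A₁)⟦k⟧, φ = 0) →
      (∀ k : ℤ, (d:ℤ) ≤ k → ∀ φ : ι.obj M ⟶ (ι.obj A₂)⟦k⟧, φ = 0) →
      ∀ k : ℤ, (d:ℤ) ≤ k → ∀ φ : ι.obj M ⟶ (ι.obj (A₁ ⊞ A₂))⟦k⟧, φ = 0 := by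
    intro A₁ A₂ h1 h2
    exact hPext A₁ (A₁ ⊞ A₂) A₂ biprod.inl biprod.snd (by simp) (hbiSE A₁ A₂) h1 h2
  -- vanishing for `syzSum`
  have hPS : ∀ e : ℕ, e ≤ d - 1 → ∀ k : ℤ, (d:ℤ) ≤ k →
      ∀ φ : ι.obj M ⟶ (ι.obj (syzSum M e))⟦k⟧, φ = 0 := by
    intro e
    induction e with
    | zero => intro _; exact hPsyz 0 (by omega)
    | succ m ihm =>
      intro hm
      exact hPbiprod (syzSum M m) (syzPow (m+1) M) (ihm (by omega))
        (hPsyz (m+1) (by omega))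
  -- vanishing for finite biproducts of `syzSum M (d-1)`
  have hPfin : ∀ nn' : ℕ, ∀ k : ℤ, (d:ℤ) ≤ k →
      ∀ φ : ι.obj M ⟶ (ι.obj (⨁ fun _ : Fin nn' => syzSum M (d-1)))⟦k⟧, φ = 0 := by
    intro nn'
    induction nn' with
    | zero =>
      have hz : IsZero (⨁ fun _ : Fin 0 => syzSum M (d-1)) := by
        rw [IsZero.iff_id_eq_zero]
        apply biproduct.hom_ext
        intro j; exact j.elim0
      have hproj : Projective (⨁ fun _ : Fin 0 => syzSum M (d-1)) := by
        constructor
        intro E Z f e he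
        exact ⟨0, hz.eq_of_src _ _⟩
      intro k _ φ
      exact hPproj _ hproj k φ
    | succ m ihm =>
      refine hPretract _ (syzSum M (d-1) ⊞ ⨁ fun _ : Fin m => syzSum M (d-1))
        (hPbiprod _ _ (hPS (d-1) le_rfl) ihm)
        (biprod.lift (biproduct.π (fun _ : Fin (m+1) => syzSum M (d-1)) 0)
          (biproduct.lift fun i : Fin m =>
            biproduct.π (fun _ : Fin (m+1) => syzSum M (d-1)) i.succ))
        (biprod.desc (biproduct.ι (fun _ : Fin (m+1) => syzSum M (d-1)) 0)
          (biproduct.desc fun i : Fin m =>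
            biproduct.ι (fun _ : Fin (m+1) => syzSum M (d-1)) i.succ)) ?_
      rw [biprod.lift_desc, biproduct.lift_desc, ← biproduct.total, Fin.sum_univ_succ]
  -- vanishing for `X'`
  have hPX' : ∀ k : ℤ, (d:ℤ) ≤ k → ∀ φ : ι.obj M ⟶ (ι.obj X')⟦k⟧, φ = 0 :=
    hPretract X' _ (hPfin nn) s r hsr
  -- the stable isomorphism becomes an isomorphism in the singularity category
  have mkIso : ∀ (N P : A), Projective P → Nonempty (ι.obj N ≅ ι.obj (N ⊞ P)) := by
    intro N P hP
    obtain ⟨con, htri⟩ := h.ses_triangle (biprod.inl : N ⟶ N ⊞ P) biprod.snd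
      (by simp) (hbiSE N P)
    have : IsIso (ι.map (biprod.inl : N ⟶ N ⊞ P)) :=
      (Triangle.isZero₃_iff_isIso₁ _ htri).1 (h.proj_isZero P hP)
    exact ⟨asIso (ι.map (biprod.inl : N ⟶ N ⊞ P))⟩
  obtain ⟨i1⟩ := mkIso (syzPow d M) Pp hPp
  obtain ⟨i2⟩ := mkIso X' Qq hQq
  obtain ⟨ed⟩ := sPowIso d
  let f₀ : ι.obj M ⟶ (ι.obj X')⟦(d:ℤ)⟧ :=
    ed.hom ≫ (shiftFunctor T (d:ℤ)).map (i1 ≪≫ ι.mapIso eiso ≪≫ i2.symm).hom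
  have hf₀iso : IsIso f₀ := by
    dsimp only [f₀]
    infer_instance
  have hf₀ : f₀ = 0 := hPX' (d:ℤ) le_rfl f₀
  have hzM : IsZero (ι.obj M) := by
    rw [IsZero.iff_id_eq_zero, ← IsIso.hom_inv_id f₀]
    nth_rewrite 1 [hf₀]
    rw [zero_comp]
  exact ((shiftFunctor T n).map_isZero hzM).of_iso eX


end SingPaper
end
end

section
/- Let A be a k-linear abelian category with enough projectives, M a virtually d-periodic object, and X an object of D_sg(A) such that the k-module Hom_{D_sg(A)}(X, M) has infinite length. Then the k-module Hom_{D_sg(A)}(X, Σ^{nd}(M)) has infinite length for every n ≥ 0. -/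
open CategoryTheory Limits Pretriangulated

noncomputable section

namespace SingPaper

variable {A : Type*} [Category A] [Abelian A] [EnoughProjectives A]

variable {T : Type*} [Category T] [Preadditive T] [HasZeroObject T] [HasShift T ℤ]
  [∀ n : ℤ, (shiftFunctor T n).Additive] [Pretriangulated T]

variable (k : Type*) [CommRing k] [Linear k A] [Linear k T]

/- ### Auxiliary module-theoretic lemmas -/

theorem aux_finLen_of_injective {k : Type*} [CommRing k] {M₁ M₂ : Type*}
    [AddCommGroup M₁] [Module k M₁] [AddCommGroup M₂] [Module k M₂]
    (f : M₁ →ₗ[k] M₂) (hf : Function.Injective f)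
    (h : IsFiniteLength k M₂) : IsFiniteLength k M₁ := by
  rw [isFiniteLength_iff_isNoetherian_isArtinian] at h ⊢
  obtain ⟨h1, h2⟩ := h
  exact ⟨isNoetherian_of_injective f hf, isArtinian_of_injective f hf⟩

theorem aux_finLen_exact {k : Type*} [CommRing k] {M₁ M₂ M₃ : Type*}
    [AddCommGroup M₁] [Module k M₁] [AddCommGroup M₂] [Module k M₂]
    [AddCommGroup M₃] [Module k M₃]
    (f : M₁ →ₗ[k] M₂) (g : M₂ →ₗ[k] M₃)
    (hfg : LinearMap.range f = LinearMap.ker g)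
    (h1 : IsFiniteLength k M₁) (h3 : IsFiniteLength k M₃) : IsFiniteLength k M₂ := by
  rw [isFiniteLength_iff_isNoetherian_isArtinian] at h1 h3 ⊢
  obtain ⟨h1a, h1b⟩ := h1; obtain ⟨h3a, h3b⟩ := h3
  exact ⟨isNoetherian_of_range_eq_ker f g hfg, isArtinian_of_range_eq_ker f g hfg⟩

/- ### Syzygies and shifts in the singularity category -/

theorem aux_syz_shortExact (N : A) :
    (ShortComplex.mk (kernel.ι (Projective.π N)) (Projective.π N)
      (kernel.condition _)).ShortExact := by
  constructor
  exact ShortComplex.exact_of_f_is_kernel _ (kernelIsKernel (Projective.π N))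

def auxSyzIso (ι : A ⥤ T) (h : IsSingularityCategory ι) (N : A) :
    (ι.obj (syz N))⟦(1:ℤ)⟧ ≅ ι.obj N := by
  have hT := (h.ses_triangle _ _ _ (aux_syz_shortExact N)).choose_spec
  have hz : IsZero ((Triangle.mk (ι.map (kernel.ι (Projective.π N)))
      (ι.map (Projective.π N)) (h.ses_triangle _ _ _ (aux_syz_shortExact N)).choose).obj₂) :=
    h.proj_isZero _ inferInstance
  have := (Triangle.isZero₂_iff_isIso₃ _ hT).mp hz
  exact (asIso ((Triangle.mk (ι.map (kernel.ι (Projective.π N)))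
      (ι.map (Projective.π N)) (h.ses_triangle _ _ _ (aux_syz_shortExact N)).choose).mor₃)).symm

def auxSyzPowIso (ι : A ⥤ T) (h : IsSingularityCategory ι) (M : A) :
    ∀ j : ℕ, (ι.obj (syzPow j M))⟦(j:ℤ)⟧ ≅ ι.obj M
  | 0 => (shiftFunctorZero T ℤ).app (ι.obj M)
  | (j+1) =>
    (shiftFunctorAdd' T 1 (j:ℤ) ((j+1:ℕ):ℤ) (by push_cast; ring)).app
        (ι.obj (syzPow (j+1) M)) ≪≫
      (shiftFunctor T (j:ℤ)).mapIso (auxSyzIso ι h (syzPow j M)) ≪≫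
      auxSyzPowIso ι h M j

/- ### The key transfer lemma along the extension closure -/

theorem aux_key (ι : A ⥤ T) (h : IsSingularityCategory ι) {M N : A}
    (hN : extClosure M N) (X : T) (m : ℤ)
    (hfin : IsFiniteLength k (X ⟶ (ι.obj M)⟦m⟧)) :
    IsFiniteLength k (X ⟶ (ι.obj N)⟦m⟧) := by
  induction hN with
  | self => exact hfin
  | proj P hP =>
    have hz : IsZero ((ι.obj P)⟦m⟧) := (shiftFunctor T m).map_isZero (h.proj_isZero P hP)
    have : Subsingleton (X ⟶ (ι.obj P)⟦m⟧) := ⟨fun a b => hz.eq_of_tgt a b⟩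
    exact .of_subsingleton
  | summand X' Y s r hsr _ ih =>
    refine aux_finLen_of_injective
      (Linear.rightComp k X ((shiftFunctor T m).map (ι.map s))) ?_ ih
    have hsr' : (shiftFunctor T m).map (ι.map s) ≫ (shiftFunctor T m).map (ι.map r) = 𝟙 _ := by
      rw [← Functor.map_comp, ← Functor.map_comp, hsr, CategoryTheory.Functor.map_id,
        CategoryTheory.Functor.map_id]
    intro a b hab
    have := congrArg (fun t => t ≫ (shiftFunctor T m).map (ι.map r)) hab
    simpa only [Linear.rightComp_apply, Category.assoc, hsr', Category.comp_id] using this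
  | ext X' Y' Z' f g w hse _ _ ihX ihZ =>
    obtain ⟨h3, hT⟩ := h.ses_triangle f g w hse
    have hT' := Pretriangulated.Triangle.shift_distinguished _ hT m
    set Tr := (CategoryTheory.shiftFunctor (Triangle T) m).obj
      (Triangle.mk (ι.map f) (ι.map g) h3) with hTr
    have hz : Tr.mor₁ ≫ Tr.mor₂ = 0 := comp_distTriang_mor_zero₁₂ _ hT'
    refine aux_finLen_exact (Linear.rightComp k X Tr.mor₁) (Linear.rightComp k X Tr.mor₂)
      ?_ ihX ihZ
    ext b
    constructor
    · rintro ⟨a, rfl⟩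
      simp only [LinearMap.mem_ker, Linear.rightComp_apply, Category.assoc, hz,
        Limits.comp_zero]
      show (a ≫ Tr.mor₁) ≫ Tr.mor₂ = 0
      rw [Category.assoc, hz, Limits.comp_zero]
    · intro hb
      obtain ⟨a, ha⟩ := Triangle.coyoneda_exact₂ _ hT' b hb
      exact ⟨a, ha.symm⟩


/-- If `M` is virtually `d`-periodic and `Hom_{D_sg(A)}(X, M)` has infinite length
over `k`, then so does `Hom_{D_sg(A)}(X, Σ^{n d}(M))` for every `n ≥ 0`. -/
theorem hom_infinite_length_shift (ι : A ⥤ T)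
    (h : IsSingularityCategory ι) (M : A) (d : ℕ) (hd : 1 ≤ d)
    (hM : VirtuallyPeriodic d M) (X : T)
    (hX : ¬ IsFiniteLength k (X ⟶ ι.obj M)) :
    ∀ n : ℕ, ¬ IsFiniteLength k (X ⟶ (ι.obj M)⟦(n * d : ℤ)⟧) := by
  intro n
  induction n with
  | zero =>
    intro hfin
    apply hX
    have e : ((ι.obj M)⟦((0:ℕ) * d : ℤ)⟧ : T) ≅ ι.obj M := by
      rw [show ((0:ℕ) * d : ℤ) = 0 by push_cast; ring]
      exact (shiftFunctorZero T ℤ).app (ι.obj M)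
    exact (Linear.homCongr k (Iso.refl X) e).isFiniteLength hfin
  | succ n ih =>
    intro hfin
    apply ih
    have hkey := aux_key k ι h hM.2 X ((n+1 : ℕ) * d : ℤ) hfin
    have e : ((ι.obj (syzPow d M))⟦((n+1:ℕ) * d : ℤ)⟧ : T) ≅ (ι.obj M)⟦((n:ℕ) * d : ℤ)⟧ :=
      (shiftFunctorAdd' T (d:ℤ) ((n:ℕ) * d : ℤ) ((n+1:ℕ) * d : ℤ) (by push_cast; ring)).app
          (ι.obj (syzPow d M)) ≪≫
        (shiftFunctor T ((n:ℕ) * d : ℤ)).mapIso (auxSyzPowIso ι h M d)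
    exact (Linear.homCongr k (Iso.refl X) e).isFiniteLength hkey

end SingPaper
end
end
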